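/- Let (K, D) be a generalized mean that is interval-infinite and whose domain D contains every nonempty bounded closed interval. Then for every ε > 0 there exist a set H ⊆ ℝ and sequences (x_n), (y_n) with x_n → −∞, y_n → +∞ such that λ(H) < ε, H ∩ [x_n, y_n] ∈ D for every n, and the sequence (K(H ∩ [x_n, y_n]))_n does not converge in ℝ̄ (in fact K(H ∩ [x_n, y_n]) > 1 for infinitely many n and K(H ∩ [x_n, y_n]) < −1 for infinitely many n). Here λ denotes Lebesgue measure. -/

import Mathlib

open Set Filter Topology Bornology

/-- A generalized mean: a domain `D` of nonempty subsets of `ℝ`, closed under finite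
unions and under intersections with intervals (when nonempty), together with a value
`K H ∈ ℝ̄` satisfying `inf H ≤ K H ≤ sup H`. -/
structure GenMean where
  D : Set (Set ℝ)
  K : Set ℝ → EReal
  nonempty_of_mem : ∀ H ∈ D, H.Nonempty
  union_mem : ∀ H₁ ∈ D, ∀ H₂ ∈ D, H₁ ∪ H₂ ∈ D
  inter_interval_mem : ∀ H ∈ D, ∀ I : Set ℝ, I.OrdConnected → (H ∩ I).Nonempty → H ∩ I ∈ D
  iInf_le_K : ∀ H ∈ D, (⨅ x ∈ H, (x : EReal)) ≤ K H
  K_le_iSup : ∀ H ∈ D, K H ≤ ⨆ x ∈ H, (x : EReal)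

/-- An extended real is finite. -/
def EFinite (x : EReal) : Prop := x ≠ ⊤ ∧ x ≠ ⊥

/-- `K` is i-slice-continuous: `x ↦ K (H^{x−})` and `x ↦ K (H^{x+})` are continuous
(into `ℝ̄`) on the sets where the slices are nonempty, and `K (H^{x−}) → K H` as
`x → +∞`, `K (H^{x+}) → K H` as `x → −∞`. -/
def GenMean.ISliceCont (M : GenMean) : Prop :=
  ∀ H ∈ M.D,
    ContinuousOn (fun x : ℝ => M.K (H ∩ Iic x)) {x : ℝ | (H ∩ Iic x).Nonempty} ∧
    ContinuousOn (fun x : ℝ => M.K (H ∩ Ici x)) {x : ℝ | (H ∩ Ici x).Nonempty} ∧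
    Tendsto (fun x : ℝ => M.K (H ∩ Iic x)) atTop (nhds (M.K H)) ∧
    Tendsto (fun x : ℝ => M.K (H ∩ Ici x)) atBot (nhds (M.K H))

/-- `K` is slice-continuous: for every `y`, `x ↦ K (H ∩ [x, y])` is continuous
where defined and tends to `K (H^{y−})` as `x → −∞`. -/
def GenMean.SliceCont (M : GenMean) : Prop :=
  ∀ H ∈ M.D, ∀ y : ℝ,
    ContinuousOn (fun x : ℝ => M.K (H ∩ Icc x y)) {x : ℝ | x ≤ y ∧ (H ∩ Icc x y).Nonempty} ∧
    Tendsto (fun x : ℝ => M.K (H ∩ Icc x y)) atBot (nhds (M.K (H ∩ Iic y)))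

/-- `K` is part-slice-continuous. -/
def GenMean.PartSliceCont (M : GenMean) : Prop :=
  ∀ H₁ ∈ M.D, ∀ H₂ ∈ M.D,
    ContinuousOn (fun x : ℝ => M.K (H₁ ∪ (H₂ ∩ Iic x))) {x : ℝ | H₁ ∪ (H₂ ∩ Iic x) ∈ M.D} ∧
    ContinuousOn (fun x : ℝ => M.K (H₁ ∪ (H₂ ∩ Ici x))) {x : ℝ | H₁ ∪ (H₂ ∩ Ici x) ∈ M.D}

/-- The bounded sets are small for sets with infinite mean. -/
def GenMean.BoundedSmall (M : GenMean) : Prop :=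
  ∀ B ∈ M.D, IsBounded B → ∀ H ∈ M.D, H ∪ B ∈ M.D →
    (M.K H = ⊤ → M.K (H ∪ B) = ⊤) ∧ (M.K H = ⊥ → M.K (H ∪ B) = ⊥)

/-- `K` is monotone: if `sup H₁ ≤ inf H₂` (i.e. every element of `H₁` is `≤` every
element of `H₂`) then `K H₁ ≤ K (H₁ ∪ H₂) ≤ K H₂`. -/
def GenMean.MonotoneMean (M : GenMean) : Prop :=
  ∀ H₁ ∈ M.D, ∀ H₂ ∈ M.D, H₁ ∪ H₂ ∈ M.D →
    (∀ a ∈ H₁, ∀ b ∈ H₂, a ≤ b) →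
    M.K H₁ ≤ M.K (H₁ ∪ H₂) ∧ M.K (H₁ ∪ H₂) ≤ M.K H₂

/-- `K` is base-monotone. -/
def GenMean.BaseMonotone (M : GenMean) : Prop :=
  ∀ H₁ ∈ M.D, ∀ H₂ ∈ M.D, H₁ ∪ H₂ ∈ M.D → Disjoint H₁ H₂ →
    min (M.K H₁) (M.K H₂) ≤ M.K (H₁ ∪ H₂) ∧ M.K (H₁ ∪ H₂) ≤ max (M.K H₁) (M.K H₂)

/-- `K` is disjoint-monotone. -/
def GenMean.DisjointMonotone (M : GenMean) : Prop :=
  ∀ H₁ ∈ M.D, ∀ H₂ ∈ M.D, H₁ ∪ H₂ ∈ M.D → Disjoint H₁ H₂ → M.K H₁ ≤ M.K H₂ →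
    M.K H₁ ≤ M.K (H₁ ∪ H₂) ∧ M.K (H₁ ∪ H₂) ≤ M.K H₂

/-- `K` is subset-finite: subsets (in the domain) of sets with finite mean have finite mean. -/
def GenMean.SubsetFinite (M : GenMean) : Prop :=
  ∀ H ∈ M.D, ∀ B ∈ M.D, B ⊆ H → EFinite (M.K H) → EFinite (M.K B)

/-- `K` is finite-independent: adding or removing a finite set does not change
the mean of an infinite set. -/
def GenMean.FiniteIndependent (M : GenMean) : Prop :=
  ∀ H ∈ M.D, H.Infinite → ∀ V : Set ℝ, V.Finite → H ∪ V ∈ M.D → H \ V ∈ M.D →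
    M.K (H ∪ V) = M.K H ∧ M.K (H \ V) = M.K H

/-- `K` is interval-infinite: translating a non-degenerate interval to `±∞`
pushes the mean to `±∞`. -/
def GenMean.IntervalInfinite (M : GenMean) : Prop :=
  ∀ a b : ℝ, a < b → ∀ H : Set ℝ, IsBounded H →
    (∀ x : ℝ, H ∪ ((fun t : ℝ => t + x) '' Icc a b) ∈ M.D) →
    Tendsto (fun x : ℝ => M.K (H ∪ ((fun t : ℝ => t + x) '' Icc a b))) atTop (nhds ⊤) ∧
    Tendsto (fun x : ℝ => M.K (H ∪ ((fun t : ℝ => t + x) '' Icc a b))) atBot (nhds ⊥)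

/-- `K` is symmetric: if `H` is invariant under the reflection `t ↦ 2s − t`
then `K H = s`. -/
def GenMean.SymmetricMean (M : GenMean) : Prop :=
  ∀ H ∈ M.D, ∀ s : ℝ, (fun t : ℝ => 2 * s - t) '' H = H → M.K H = (s : EReal)

open scoped Classical in
/-- The base-monotonicity coefficient `c(A, B)` (meaningful when all the means
involved are finite): `c(A,B) = (K(A∪B) − K(B))/(K(A) − K(B))` if `K A ≠ K B`, else `0`. -/
noncomputable def GenMean.coeff (M : GenMean) (A B : Set ℝ) : ℝ :=
  if M.K A = M.K B then 0
  else ((M.K (A ∪ B)).toReal - (M.K B).toReal) / ((M.K A).toReal - (M.K B).toReal)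

/-- `K` is strong-base-monotone. -/
def GenMean.StrongBaseMonotone (M : GenMean) : Prop :=
  M.BaseMonotone ∧
  ∀ H₁ ∈ M.D, ∀ H₂ ∈ M.D, ∀ B ∈ M.D, H₁ ⊆ H₂ → Disjoint H₂ B →
    H₁ ∪ B ∈ M.D → H₂ ∪ B ∈ M.D →
    EFinite (M.K H₁) → EFinite (M.K H₂) → EFinite (M.K B) →
    EFinite (M.K (H₁ ∪ B)) → EFinite (M.K (H₂ ∪ B)) →
    M.coeff H₁ B ≤ M.coeff H₂ B

/-- `K̂ H = L`: the double limit `lim_{x→−∞, y→+∞} K (H ∩ [x, y]) = L` in `ℝ̄`. -/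
def GenMean.HatLim (M : GenMean) (H : Set ℝ) (L : EReal) : Prop :=
  Tendsto (fun p : ℝ × ℝ => M.K (H ∩ Icc p.1 p.2)) (atBot ×ˢ atTop) (nhds L)

open MeasureTheory

def GMGood (M : GenMean) (p : Set ℝ × ℝ × ℝ) : Prop :=
  p.1 ∈ M.D ∧ p.1 ⊆ Icc p.2.1 p.2.2

def GMStep (M : GenMean) (ε : ℝ) (n : ℕ) (p q : Set ℝ × ℝ × ℝ) : Prop :=
  p.1 ⊆ q.1 ∧ q.2.1 ≤ p.2.1 ∧ p.2.2 ≤ q.2.2 ∧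
  q.1 ∩ Icc (p.2.1 - 1) (p.2.2 + 1) ⊆ p.1 ∧
  volume q.1 ≤ volume p.1 + ENNReal.ofReal (ε * (2⁻¹:ℝ)^(n+3)) ∧
  (Even n → 1 < M.K q.1 ∧ p.2.2 + 1 ≤ q.2.2) ∧
  (¬ Even n → M.K q.1 < -1 ∧ q.2.1 ≤ p.2.1 - 1)

lemma GMkey (M : GenMean) (hii : M.IntervalInfinite)
    (hIcc : ∀ a b : ℝ, a ≤ b → Icc a b ∈ M.D)
    (ε : ℝ) (hε : 0 < ε) (n : ℕ) (p : Set ℝ × ℝ × ℝ) (hp : GMGood M p) :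
    ∃ q, GMGood M q ∧ GMStep M ε n p q := by
  obtain ⟨S, m, Mx⟩ := p
  obtain ⟨hS, hsub⟩ := hp
  dsimp only at hS hsub
  set δ := ε * (2⁻¹:ℝ)^(n+3) with hδdef
  have hδ : 0 < δ := by positivity
  have hmM : m ≤ Mx := by
    obtain ⟨t, ht⟩ := M.nonempty_of_mem S hS
    have h := hsub ht; exact le_trans h.1 h.2
  have himg : ∀ x : ℝ, (fun t : ℝ => t + x) '' Icc 0 δ = Icc x (x + δ) := fun x => by
    rw [image_add_const_Icc, zero_add, add_comm]
  have hmem : ∀ x : ℝ, S ∪ ((fun t : ℝ => t + x) '' Icc 0 δ) ∈ M.D := fun x => by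
    rw [himg]; exact M.union_mem S hS _ (hIcc _ _ (by (try dsimp only); linarith))
  have hbdd : IsBounded S := (Metric.isBounded_Icc m Mx).subset hsub
  have H2 := hii 0 δ hδ S hbdd hmem
  have hvolu : ∀ x : ℝ, volume (S ∪ Icc x (x + δ)) ≤ volume S + ENNReal.ofReal δ := by
    intro x
    calc volume (S ∪ Icc x (x+δ)) ≤ volume S + volume (Icc x (x+δ)) := measure_union_le _ _
      _ = volume S + ENNReal.ofReal δ := by rw [Real.volume_Icc, add_sub_cancel_left]
  by_cases hn : Even n
  · have h1 : ∀ᶠ x in atTop, 1 < M.K (S ∪ ((fun t : ℝ => t + x) '' Icc 0 δ)) :=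
      H2.1.eventually (Ioi_mem_nhds (by
        rw [show (1:EReal) = ((1:ℝ):EReal) by norm_num]; exact EReal.coe_lt_top 1))
    obtain ⟨x, hx1, hx2⟩ := (h1.and (eventually_gt_atTop (Mx + 1))).exists
    rw [himg] at hx1
    refine ⟨(S ∪ Icc x (x + δ), m, x + δ),
      ⟨M.union_mem S hS _ (hIcc _ _ (by (try dsimp only); linarith)), ?_⟩,
      subset_union_left, le_refl _, by (try dsimp only); linarith, ?_, hvolu x,
      fun _ => ⟨hx1, by (try dsimp only); linarith⟩, fun h => absurd hn h⟩
    · exact union_subset (hsub.trans (Icc_subset_Icc le_rfl (by (try dsimp only); linarith)))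
        (Icc_subset_Icc (by (try dsimp only); linarith) le_rfl)
    · rintro t ⟨ht1 | ht1, ht2⟩
      · exact ht1
      · exfalso; have := ht1.1; have := ht2.2; linarith
  · have h1 : ∀ᶠ x in atBot, M.K (S ∪ ((fun t : ℝ => t + x) '' Icc 0 δ)) < -1 :=
      H2.2.eventually (Iio_mem_nhds (by
        rw [show (-1:EReal) = ((-1:ℝ):EReal) by norm_num]; exact EReal.bot_lt_coe _))
    obtain ⟨x, hx1, hx2⟩ := (h1.and (eventually_lt_atBot (m - 1 - δ))).exists
    rw [himg] at hx1
    refine ⟨(S ∪ Icc x (x + δ), x, Mx),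
      ⟨M.union_mem S hS _ (hIcc _ _ (by (try dsimp only); linarith)), ?_⟩,
      subset_union_left, by (try dsimp only); linarith, le_refl _, ?_, hvolu x,
      fun h => absurd h hn, fun _ => ⟨hx1, by (try dsimp only); linarith⟩⟩
    · exact union_subset (hsub.trans (Icc_subset_Icc (by (try dsimp only); linarith) le_rfl))
        (Icc_subset_Icc le_rfl (by (try dsimp only); linarith))
    · rintro t ⟨ht1 | ht1, ht2⟩
      · exact ht1
      · exfalso; have := ht1.2; have := ht2.1; linarith

noncomputable def GMseq (M : GenMean) (hii : M.IntervalInfinite)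
    (hIcc : ∀ a b : ℝ, a ≤ b → Icc a b ∈ M.D) (ε : ℝ) (hε : 0 < ε) :
    ℕ → {p : Set ℝ × ℝ × ℝ // GMGood M p}
  | 0 => ⟨(Icc 0 (ε * (2⁻¹:ℝ)^2), 0, ε * (2⁻¹:ℝ)^2),
      hIcc _ _ (by positivity), subset_rfl⟩
  | n+1 => ⟨(GMkey M hii hIcc ε hε n (GMseq M hii hIcc ε hε n).1
        (GMseq M hii hIcc ε hε n).2).choose,
      (GMkey M hii hIcc ε hε n (GMseq M hii hIcc ε hε n).1
        (GMseq M hii hIcc ε hε n).2).choose_spec.1⟩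

lemma GMseq_zero (M : GenMean) (hii : M.IntervalInfinite)
    (hIcc : ∀ a b : ℝ, a ≤ b → Icc a b ∈ M.D) (ε : ℝ) (hε : 0 < ε) :
    (GMseq M hii hIcc ε hε 0).1 = (Icc 0 (ε * (2⁻¹:ℝ)^2), 0, ε * (2⁻¹:ℝ)^2) := rfl

lemma GMseq_step (M : GenMean) (hii : M.IntervalInfinite)
    (hIcc : ∀ a b : ℝ, a ≤ b → Icc a b ∈ M.D) (ε : ℝ) (hε : 0 < ε) (n : ℕ) :
    GMStep M ε n (GMseq M hii hIcc ε hε n).1 (GMseq M hii hIcc ε hε (n+1)).1 := by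
  have h := (GMkey M hii hIcc ε hε n (GMseq M hii hIcc ε hε n).1
    (GMseq M hii hIcc ε hε n).2).choose_spec.2
  simpa [GMseq] using h

theorem stmt_6 (M : GenMean) (hii : M.IntervalInfinite)
    (hIcc : ∀ a b : ℝ, a ≤ b → Icc a b ∈ M.D) :
    ∀ ε : ℝ, 0 < ε → ∃ H : Set ℝ, ∃ x y : ℕ → ℝ,
      Tendsto x atTop atBot ∧ Tendsto y atTop atTop ∧
      MeasureTheory.volume H < ENNReal.ofReal ε ∧
      (∀ n : ℕ, H ∩ Icc (x n) (y n) ∈ M.D) ∧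
      (¬ ∃ L : EReal, Tendsto (fun n : ℕ => M.K (H ∩ Icc (x n) (y n))) atTop (nhds L)) ∧
      {n : ℕ | 1 < M.K (H ∩ Icc (x n) (y n))}.Infinite ∧
      {n : ℕ | M.K (H ∩ Icc (x n) (y n)) < -1}.Infinite := by
  intro ε hε
  set S : ℕ → Set ℝ := fun n => (GMseq M hii hIcc ε hε n).1.1 with hSdef
  set m : ℕ → ℝ := fun n => (GMseq M hii hIcc ε hε n).1.2.1 with hmdef
  set B : ℕ → ℝ := fun n => (GMseq M hii hIcc ε hε n).1.2.2 with hBdef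
  have hgood : ∀ n, S n ∈ M.D ∧ S n ⊆ Icc (m n) (B n) := fun n =>
    (GMseq M hii hIcc ε hε n).2
  have hstep : ∀ n, GMStep M ε n (S n, m n, B n) (S (n+1), m (n+1), B (n+1)) := fun n =>
    GMseq_step M hii hIcc ε hε n
  have hsub : ∀ n, S n ⊆ S (n+1) := fun n => (hstep n).1
  have hmdec : ∀ n, m (n+1) ≤ m n := fun n => (hstep n).2.1
  have hMinc : ∀ n, B n ≤ B (n+1) := fun n => (hstep n).2.2.1
  have hwin : ∀ n, S (n+1) ∩ Icc (m n - 1) (B n + 1) ⊆ S n := fun n => (hstep n).2.2.2.1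
  have hvolstep : ∀ n, volume (S (n+1)) ≤ volume (S n) + ENNReal.ofReal (ε * (2⁻¹:ℝ)^(n+3)) :=
    fun n => (hstep n).2.2.2.2.1
  have hev : ∀ n, Even n → 1 < M.K (S (n+1)) ∧ B n + 1 ≤ B (n+1) :=
    fun n => (hstep n).2.2.2.2.2.1
  have hod : ∀ n, ¬ Even n → M.K (S (n+1)) < -1 ∧ m (n+1) ≤ m n - 1 :=
    fun n => (hstep n).2.2.2.2.2.2
  have hSmono : Monotone S := monotone_nat_of_le_succ hsub
  have hmanti : Antitone m := antitone_nat_of_succ_le hmdec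
  have hBmono : Monotone B := monotone_nat_of_le_succ hMinc
  have hmB : ∀ n, m n ≤ B n := fun n => by
    obtain ⟨t, ht⟩ := M.nonempty_of_mem _ (hgood n).1
    have h := (hgood n).2 ht; exact le_trans h.1 h.2
  have hslice : ∀ n, (⋃ k, S k) ∩ Icc (m n - 1) (B n + 1) = S n := by
    intro n
    apply subset_antisymm
    · have claim : ∀ j, n ≤ j → S j ∩ Icc (m n - 1) (B n + 1) ⊆ S n := by
        intro j hj
        induction j, hj using Nat.le_induction with
        | base => exact inter_subset_left
        | succ j hj ih =>
          intro t ht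
          refine ih ⟨hwin j ⟨ht.1, ?_⟩, ht.2⟩
          exact Icc_subset_Icc (by have := hmanti hj; linarith)
            (by have := hBmono hj; linarith) ht.2
      rintro t ⟨ht1, ht2⟩
      obtain ⟨k, htk⟩ := mem_iUnion.1 ht1
      rcases le_or_gt k n with h | h
      · exact hSmono h htk
      · exact claim k h.le ⟨htk, ht2⟩
    · exact subset_inter (subset_iUnion S n)
        ((hgood n).2.trans (Icc_subset_Icc (by linarith [hmB n]) (by linarith [hmB n])))
  have hhalf : Tendsto (fun n : ℕ => ((n/2:ℕ):ℝ)) atTop atTop :=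
    tendsto_natCast_atTop_atTop.comp
      (tendsto_atTop_atTop.2 fun b => ⟨2*b, fun a ha => by omega⟩)
  -- m estimates
  have hm2 : ∀ n, m (n+2) ≤ m n - 1 := by
    intro n
    rcases Nat.even_or_odd n with he | ho
    · have h := (hod (n+1) (by simp [Nat.even_add_one, he])).2
      have := hmdec n; linarith
    · have h := (hod n (Nat.not_even_iff_odd.2 ho)).2
      have := hmdec (n+1); linarith
  have hm2k : ∀ k : ℕ, m (2*k) ≤ m 0 - (k:ℝ) := by
    intro k; induction k with
    | zero => simp
    | succ k ih =>
      have e : 2*(k+1) = 2*k+2 := by ring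
      rw [e]
      have := hm2 (2*k)
      push_cast
      linarith
  have hmn : ∀ n, m n ≤ m 0 - ((n/2 : ℕ):ℝ) := fun n =>
    le_trans (hmanti (by omega : 2*(n/2) ≤ n)) (hm2k (n/2))
  -- B estimates
  have hB2 : ∀ n, B n + 1 ≤ B (n+2) := by
    intro n
    rcases Nat.even_or_odd n with he | ho
    · have h := (hev n he).2
      have := hMinc (n+1); linarith
    · have h := (hev (n+1) (Nat.even_add_one.2 (Nat.not_even_iff_odd.2 ho))).2
      have := hMinc n; linarith
  have hB2k : ∀ k : ℕ, B 0 + (k:ℝ) ≤ B (2*k) := by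
    intro k; induction k with
    | zero => simp
    | succ k ih =>
      have e : 2*(k+1) = 2*k+2 := by ring
      rw [e]
      have := hB2 (2*k)
      push_cast
      linarith
  have hBn : ∀ n, B 0 + ((n/2 : ℕ):ℝ) ≤ B n := fun n =>
    le_trans (hB2k (n/2)) (hBmono (by omega : 2*(n/2) ≤ n))
  -- volume
  have hvol1 : ∀ n, volume (S n) ≤
      ENNReal.ofReal (∑ k ∈ Finset.range (n+1), ε * (2⁻¹:ℝ)^(k+2)) := by
    intro n; induction n with
    | zero =>
      have h0 : S 0 = Icc 0 (ε * (2⁻¹:ℝ)^2) :=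
        congrArg Prod.fst (GMseq_zero M hii hIcc ε hε)
      rw [h0, Real.volume_Icc, Finset.sum_range_one]
      norm_num
    | succ n ih =>
      calc volume (S (n+1)) ≤ volume (S n) + ENNReal.ofReal (ε*(2⁻¹:ℝ)^(n+3)) := hvolstep n
        _ ≤ ENNReal.ofReal (∑ k ∈ Finset.range (n+1), ε * (2⁻¹:ℝ)^(k+2))
            + ENNReal.ofReal (ε*(2⁻¹:ℝ)^(n+3)) := add_le_add_left ih _
        _ = ENNReal.ofReal (∑ k ∈ Finset.range (n+2), ε * (2⁻¹:ℝ)^(k+2)) := by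
            rw [← ENNReal.ofReal_add (by positivity) (by positivity)]
            congr 1
            conv_rhs => rw [Finset.sum_range_succ]
            try norm_num
  have hsum : ∀ n, (∑ k ∈ Finset.range n, ε * (2⁻¹:ℝ)^(k+2)) ≤ ε/2 := by
    intro n
    have h1 : (∑ k ∈ Finset.range n, ε * (2⁻¹:ℝ)^(k+2))
        = ε/4 * ∑ k ∈ Finset.range n, (1/(2:ℝ))^k := by
      rw [Finset.mul_sum]; refine Finset.sum_congr rfl fun k _ => by ring
    rw [h1]
    nlinarith [sum_geometric_two_le n, hε.le]
  -- K values
  have hset1 : {n : ℕ | 1 < M.K (S n)}.Infinite :=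
    Set.infinite_of_injective_forall_mem (f := fun k : ℕ => 2*k+1)
      (fun a b h => by dsimp only at h; omega) (fun k => (hev (2*k) (even_two_mul k)).1)
  have hset2 : {n : ℕ | M.K (S n) < -1}.Infinite :=
    Set.infinite_of_injective_forall_mem (f := fun k : ℕ => 2*k+2)
      (fun a b h => by dsimp only at h; omega)
      (fun k => (hod (2*k+1) (fun h => (Nat.even_add_one.1 h) (even_two_mul k))).1)
  have hne1 : (-1:EReal) < 1 := by
    rw [show (-1:EReal) = ((-1:ℝ):EReal) by norm_num,
      show (1:EReal) = ((1:ℝ):EReal) by norm_num, EReal.coe_lt_coe_iff]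
    norm_num
  refine ⟨⋃ n, S n, fun n => m n - 1, fun n => B n + 1, ?_, ?_, ?_, ?_, ?_, ?_, ?_⟩
  · -- x → -∞
    have hg : Tendsto (fun n : ℕ => m 0 - 1 + -((n/2:ℕ):ℝ)) atTop atBot :=
      tendsto_atBot_add_const_left _ _ (tendsto_neg_atTop_atBot.comp hhalf)
    exact tendsto_atBot_mono (fun n => by have := hmn n; linarith) hg
  · -- y → +∞
    have hg : Tendsto (fun n : ℕ => B 0 + ((n/2:ℕ):ℝ)) atTop atTop :=
      tendsto_atTop_add_const_left _ _ hhalf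
    exact tendsto_atTop_mono (fun n => by have := hBn n; linarith) hg
  · -- volume
    rw [hSmono.measure_iUnion]
    refine lt_of_le_of_lt (iSup_le fun n =>
      (hvol1 n).trans (ENNReal.ofReal_le_ofReal (hsum (n+1)))) ?_
    exact (ENNReal.ofReal_lt_ofReal_iff hε).2 (by linarith)
  · intro n; rw [hslice n]; exact (hgood n).1
  · rintro ⟨L, hL⟩
    have hf1 : ∃ᶠ n in atTop,
        M.K ((⋃ k, S k) ∩ Icc (m n - 1) (B n + 1)) ∈ Ici (1:EReal) :=
      Nat.frequently_atTop_iff_infinite.2 (by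
        refine Set.Infinite.mono ?_ hset1
        intro n hn
        simp only [mem_setOf_eq, mem_Ici] at *
        rw [hslice n]; exact hn.le)
    have hf2 : ∃ᶠ n in atTop,
        M.K ((⋃ k, S k) ∩ Icc (m n - 1) (B n + 1)) ∈ Iic (-1:EReal) :=
      Nat.frequently_atTop_iff_infinite.2 (by
        refine Set.Infinite.mono ?_ hset2
        intro n hn
        simp only [mem_setOf_eq, mem_Iic] at *
        rw [hslice n]; exact hn.le)
    have hL1 : L ∈ Ici (1:EReal) := isClosed_Ici.mem_of_frequently_of_tendsto hf1 hL
    have hL2 : L ∈ Iic (-1:EReal) := isClosed_Iic.mem_of_frequently_of_tendsto hf2 hL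
    exact absurd (le_trans hL1 hL2) (not_le.2 hne1)
  · have he : {n : ℕ | 1 < M.K ((⋃ k, S k) ∩ Icc (m n - 1) (B n + 1))}
        = {n : ℕ | 1 < M.K (S n)} := by
      ext n; simp only [mem_setOf_eq]; rw [hslice n]
    rw [he]; exact hset1
  · have he : {n : ℕ | M.K ((⋃ k, S k) ∩ Icc (m n - 1) (B n + 1)) < -1}
        = {n : ℕ | M.K (S n) < -1} := by
      ext n; simp only [mem_setOf_eq]; rw [hslice n]
    rw [he]; exact hset2
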